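/- Suppose K : (0,∞) → [0,∞) is locally integrable, eventually decreasing with K(t) → 0 at infinity, and there exist constants C₁ > 0 and β₁ > 0 such that |t·K(t) − C₁| = O(t^{-β₁}) as t → ∞. Then |K_cos(ω)/|log ω| − C₁| = O(|log ω|^{-1}) as ω → 0⁺. -/

import Mathlib

open MeasureTheory Filter Set Real Asymptotics
open intervalIntegral


lemma aux_II (K : ℝ → ℝ) (A : ℝ) (hA : 0 < A)
    (hloc : LocallyIntegrableOn K (Ioi 0))
    {a b : ℝ} (ha : A ≤ a) (hb : A ≤ b) :
    IntervalIntegrable K volume a b := by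
  have hsub : uIcc a b ⊆ Ioi (0:ℝ) := fun x hx => lt_of_lt_of_le hA
    (le_trans (le_min ha hb) hx.1)
  exact (hloc.integrableOn_compact_subset hsub isCompact_uIcc).intervalIntegrable

lemma aux_IIc (K : ℝ → ℝ) (A : ℝ) (hA : 0 < A)
    (hloc : LocallyIntegrableOn K (Ioi 0)) (ω : ℝ)
    {a b : ℝ} (ha : A ≤ a) (hb : A ≤ b) :
    IntervalIntegrable (fun t => K t * Real.cos (ω * t)) volume a b :=
  (aux_II K A hA hloc ha hb).mul_continuousOn
    (Continuous.continuousOn (by continuity))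

lemma tri_aux (a b c : ℝ) : |a + b - c| ≤ |a| + |b| + |c| := by
  have h1 := abs_add_le (a + b) (-c)
  have h2 := abs_add_le a b
  rw [abs_neg] at h1
  calc |a + b - c| = |a + b + -c| := by ring_nf
    _ ≤ |a + b| + |c| := h1
    _ ≤ |a| + |b| + |c| := by linarith

lemma dirichlet_bound (K : ℝ → ℝ) (A : ℝ) (hA : 0 < A)
    (hanti : AntitoneOn K (Ici A)) (hnn : ∀ t ∈ Ici A, 0 ≤ K t)
    (hloc : LocallyIntegrableOn K (Ioi 0))
    (ω S T : ℝ) (hω : 0 < ω) (hS : A ≤ S) (hT : S ≤ T) :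
    |∫ t in S..T, K t * Real.cos (ω * t)| ≤ 3/2 * (K S * (π / ω)) := by
  set h : ℝ := π / ω with hh
  have hhpos : 0 < h := div_pos Real.pi_pos hω
  have hKS : 0 ≤ K S := hnn S hS
  have hb : ∀ {a b : ℝ}, S ≤ a → a ≤ b →
      |∫ t in a..b, K t * Real.cos (ω * t)| ≤ K S * (b - a) := by
    intro a b haS hab
    have := intervalIntegral.norm_integral_le_of_norm_le_const
      (f := fun t => K t * Real.cos (ω * t)) (C := K S) (a := a) (b := b) ?_
    · rwa [Real.norm_eq_abs, abs_of_nonneg (by linarith : (0:ℝ) ≤ b - a)] at this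
    · intro x hx
      rw [uIoc_of_le hab] at hx
      have hxa : S ≤ x := le_trans haS hx.1.le
      have h1 : K x ≤ K S := hanti hS (le_trans hS hxa) hxa
      have h2 : 0 ≤ K x := hnn x (le_trans hS hxa)
      rw [Real.norm_eq_abs, abs_mul]
      calc |K x| * |Real.cos (ω * x)| ≤ K x * 1 := by
            rw [abs_of_nonneg h2]
            exact mul_le_mul_of_nonneg_left (abs_cos_le_one _) h2
        _ ≤ K S := by linarith
  rcases le_or_gt T (S + h) with hcase | hcase
  · calc |∫ t in S..T, K t * Real.cos (ω * t)| ≤ K S * (T - S) := hb le_rfl hT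
      _ ≤ 3/2 * (K S * h) := by nlinarith
  · -- main case
    set f : ℝ → ℝ := fun t => K t * Real.cos (ω * t) with hf
    set g : ℝ → ℝ := fun t => K (t - h) * Real.cos (ω * t) with hg
    have hωh : ω * h = π := by rw [hh]; field_simp
    have hgf : ∀ t, g t = -(f (t - h)) := by
      intro t
      have : ω * (t - h) = ω * t - π := by rw [mul_sub, hωh]
      simp only [hg, hf, this, Real.cos_sub_pi]
      ring
    have hIf : ∀ {a b : ℝ}, S ≤ a → S ≤ b → IntervalIntegrable f volume a b :=
      fun ha hb' => aux_IIc K A hA hloc ω (le_trans hS ha) (le_trans hS hb')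
    have hIg : ∀ {a b : ℝ}, S + h ≤ a → S + h ≤ b → IntervalIntegrable g volume a b := by
      intro a b ha hb'
      have h1 : IntervalIntegrable (fun t => f (t - h)) volume a b := by
        have := (hIf (a := a - h) (b := b - h) (by linarith) (by linarith)).comp_sub_right h
        simpa using this
      have hgfe : g = fun t => -(f (t - h)) := funext hgf
      rw [hgfe]
      exact h1.neg
    have hJ : (∫ t in (S+h)..(T+h), g t) = -(∫ t in S..T, f t) := by
      have h1 : (∫ t in (S+h)..(T+h), f (t - h)) = ∫ t in S..T, f t := by
        rw [intervalIntegral.integral_comp_sub_right]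
        norm_num
      calc (∫ t in (S+h)..(T+h), g t) = ∫ t in (S+h)..(T+h), -(f (t - h)) := by
            simp_rw [hgf]
        _ = -(∫ t in S..T, f t) := by rw [intervalIntegral.integral_neg, h1]
    have hsplitI : (∫ t in S..T, f t) = (∫ t in S..(S+h), f t) + ∫ t in (S+h)..T, f t :=
      (intervalIntegral.integral_add_adjacent_intervals
        (hIf le_rfl (by linarith)) (hIf (by linarith) (by linarith))).symm
    have hsplitJ : (∫ t in (S+h)..(T+h), g t) = (∫ t in (S+h)..T, g t) + ∫ t in T..(T+h), g t :=
      (intervalIntegral.integral_add_adjacent_intervals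
        (hIg le_rfl (by linarith)) (hIg (by linarith) (by linarith))).symm
    have key : 2 * (∫ t in S..T, f t) =
        (∫ t in S..(S+h), f t) + (∫ t in (S+h)..T, (f t - g t)) - ∫ t in T..(T+h), g t := by
      rw [intervalIntegral.integral_sub (hIf (by linarith) (by linarith))
        (hIg le_rfl (by linarith))]
      have h2 := hJ
      rw [hsplitJ] at h2
      rw [hsplitI]
      linarith [h2]
    have b1 : |∫ t in S..(S+h), f t| ≤ K S * h := by
      have := hb (a := S) (b := S + h) le_rfl (by linarith)
      simpa using this
    have b3 : |∫ t in T..(T+h), g t| ≤ K S * h := by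
      have h0 := intervalIntegral.norm_integral_le_of_norm_le_const
        (f := g) (C := K S) (a := T) (b := T + h) ?_
      · rw [Real.norm_eq_abs] at h0
        calc |∫ t in T..(T+h), g t| ≤ K S * |T + h - T| := h0
          _ = K S * h := by rw [show T + h - T = h by ring, abs_of_pos hhpos]
      · intro x hx
        rw [uIoc_of_le (by linarith)] at hx
        have hxS : S ≤ x - h := by
          have := hx.1
          linarith
        have h1 : K (x - h) ≤ K S := hanti hS (le_trans hS hxS) hxS
        have h2 : 0 ≤ K (x - h) := hnn _ (le_trans hS hxS)
        rw [Real.norm_eq_abs, abs_mul, abs_of_nonneg h2]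
        calc K (x - h) * |Real.cos (ω * x)| ≤ K (x - h) * 1 :=
              mul_le_mul_of_nonneg_left (abs_cos_le_one _) h2
          _ ≤ K S := by linarith
    have hIK : ∀ {a b : ℝ}, S ≤ a → S ≤ b → IntervalIntegrable K volume a b :=
      fun ha hb' => aux_II K A hA hloc (le_trans hS ha) (le_trans hS hb')
    have b2 : |∫ t in (S+h)..T, (f t - g t)| ≤ K S * h := by
      have hmono : ∀ x ∈ Icc (S+h) T, |f x - g x| ≤ K (x - h) - K x := by
        intro x hx
        have hxS : S ≤ x - h := by linarith [hx.1]
        have hxA : A ≤ x - h := le_trans hS hxS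
        have hdiff : K x ≤ K (x - h) := hanti hxA (mem_Ici.mpr (by linarith)) (by linarith)
        have he : f x - g x = (K x - K (x - h)) * Real.cos (ω * x) := by
          simp only [hf, hg]; ring
        rw [he, abs_mul]
        calc |K x - K (x - h)| * |Real.cos (ω * x)| ≤ |K x - K (x - h)| * 1 :=
              mul_le_mul_of_nonneg_left (abs_cos_le_one _) (abs_nonneg _)
          _ = K (x - h) - K x := by rw [mul_one, abs_of_nonpos (by linarith)]; ring
      have hKsh : IntervalIntegrable (fun x => K (x - h)) volume (S+h) T := by
        have := (hIK (a := S) (b := T - h) le_rfl (by linarith)).comp_sub_right h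
        simpa using this
      have hIKs : IntervalIntegrable (fun x => K (x - h) - K x) volume (S+h) T :=
        hKsh.sub (hIK (by linarith) (by linarith))
      have hfg : IntervalIntegrable (fun t => f t - g t) volume (S+h) T :=
        (hIf (by linarith) (by linarith)).sub (hIg le_rfl (by linarith))
      have step1 : |∫ t in (S+h)..T, (f t - g t)| ≤ ∫ t in (S+h)..T, (K (t - h) - K t) := by
        calc |∫ t in (S+h)..T, (f t - g t)| ≤ ∫ t in (S+h)..T, |f t - g t| := by
              rw [← Real.norm_eq_abs]
              simpa [Real.norm_eq_abs] using
                intervalIntegral.norm_integral_le_integral_norm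
                  (f := fun t => f t - g t) (a := S+h) (b := T) (by linarith : S+h ≤ T)
          _ ≤ ∫ t in (S+h)..T, (K (t - h) - K t) :=
              intervalIntegral.integral_mono_on (by linarith) hfg.abs hIKs hmono
      have e1 : (∫ t in (S+h)..T, K (t - h)) = ∫ t in S..(T-h), K t := by
        rw [intervalIntegral.integral_comp_sub_right]
        norm_num
      have esub : (∫ t in (S+h)..T, (K (t - h) - K t))
          = (∫ t in (S+h)..T, K (t-h)) - ∫ t in (S+h)..T, K t :=
        intervalIntegral.integral_sub hKsh (hIK (by linarith) (by linarith))
      have eq2 : (∫ t in S..(T-h), K t)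
          = (∫ t in S..(S+h), K t) + ∫ t in (S+h)..(T-h), K t :=
        (intervalIntegral.integral_add_adjacent_intervals
          (hIK le_rfl (by linarith)) (hIK (by linarith) (by linarith))).symm
      have eq3 : (∫ t in (S+h)..T, K t)
          = (∫ t in (S+h)..(T-h), K t) + ∫ t in (T-h)..T, K t :=
        (intervalIntegral.integral_add_adjacent_intervals
          (hIK (by linarith) (by linarith)) (hIK (by linarith) (by linarith))).symm
      have pos : 0 ≤ ∫ t in (T-h)..T, K t :=
        intervalIntegral.integral_nonneg (by linarith)
          (fun u hu => hnn u (le_trans hS (by linarith [hu.1])))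
      have upper : (∫ t in S..(S+h), K t) ≤ K S * h := by
        calc (∫ t in S..(S+h), K t) ≤ ∫ _t in S..(S+h), K S :=
              intervalIntegral.integral_mono_on (by linarith) (hIK le_rfl (by linarith))
                intervalIntegrable_const
                (fun x hx => hanti hS (le_trans hS hx.1) hx.1)
          _ = K S * h := by simp [intervalIntegral.integral_const]; ring
      calc |∫ t in (S+h)..T, (f t - g t)| ≤ ∫ t in (S+h)..T, (K (t - h) - K t) := step1
        _ = (∫ t in S..(S+h), K t) - ∫ t in (T-h)..T, K t := by
            rw [esub, e1, eq2, eq3]; ring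
        _ ≤ K S * h := by linarith
    have final : |2 * ∫ t in S..T, f t| ≤ 3 * (K S * h) := by
      rw [key]
      calc |(∫ t in S..(S+h), f t) + (∫ t in (S+h)..T, (f t - g t)) - ∫ t in T..(T+h), g t|
          ≤ |∫ t in S..(S+h), f t| + |∫ t in (S+h)..T, (f t - g t)| + |∫ t in T..(T+h), g t| :=
            tri_aux _ _ _
        _ ≤ 3 * (K S * h) := by linarith
    rw [abs_mul] at final
    have : |(2:ℝ)| = 2 := by norm_num
    rw [this] at final
    linarith


lemma middle_bound (K : ℝ → ℝ) (C₁ β₁ c B : ℝ) (hC₁ : 0 < C₁) (hβ₁ : 0 < β₁)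
    (hc : 0 ≤ c) (hB : 1 ≤ B)
    (hrate' : ∀ t, B ≤ t → |t * K t - C₁| ≤ c * t ^ (-β₁))
    (ω : ℝ) (hω : 0 < ω) (hBS : B ≤ ω⁻¹)
    (hIK : IntervalIntegrable K volume B ω⁻¹) :
    |(∫ t in B..ω⁻¹, K t * Real.cos (ω * t)) - C₁ * (Real.log ω⁻¹ - Real.log B)|
      ≤ c * B ^ (-β₁) / β₁ + C₁ / 4 := by
  set S : ℝ := ω⁻¹ with hS
  have hB0 : (0:ℝ) < B := lt_of_lt_of_le one_pos hB
  have hS0 : (0:ℝ) < S := inv_pos.mpr hω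
  have hωS : ω * S = 1 := mul_inv_cancel₀ (ne_of_gt hω)
  have hpos : ∀ t ∈ uIcc B S, (0:ℝ) < t := by
    intro t ht
    rw [uIcc_of_le hBS] at ht
    exact lt_of_lt_of_le hB0 ht.1
  have hne : ∀ t ∈ uIcc B S, t ≠ 0 := fun t ht => ne_of_gt (hpos t ht)
  have hcos : ContinuousOn (fun t : ℝ => Real.cos (ω * t)) (uIcc B S) :=
    (Continuous.continuousOn (by continuity))
  have hinv : ContinuousOn (fun t : ℝ => t⁻¹) (uIcc B S) :=
    ContinuousOn.inv₀ continuousOn_id hne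
  have J1 : IntervalIntegrable (fun t => (K t - C₁ * t⁻¹) * Real.cos (ω * t)) volume B S :=
    (hIK.sub ((hinv.const_smul C₁).intervalIntegrable)).mul_continuousOn hcos
  have J2 : IntervalIntegrable (fun t => C₁ * (t⁻¹ * (Real.cos (ω * t) - 1))) volume B S :=
    (((hinv.mul (hcos.sub continuousOn_const))).const_smul C₁).intervalIntegrable
  have J3 : IntervalIntegrable (fun t : ℝ => C₁ * t⁻¹) volume B S :=
    (hinv.const_smul C₁).intervalIntegrable
  have hsplit : (∫ t in B..S, K t * Real.cos (ω * t))
      = (∫ t in B..S, (K t - C₁ * t⁻¹) * Real.cos (ω * t))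
        + (∫ t in B..S, C₁ * (t⁻¹ * (Real.cos (ω * t) - 1)))
        + ∫ t in B..S, C₁ * t⁻¹ := by
    rw [← intervalIntegral.integral_add J1 J2,
      ← intervalIntegral.integral_add (J1.add J2) J3]
    apply intervalIntegral.integral_congr
    intro t _
    ring
  have hlog : (∫ t in B..S, C₁ * t⁻¹) = C₁ * (Real.log S - Real.log B) := by
    rw [intervalIntegral.integral_const_mul, integral_inv_of_pos hB0 hS0,
      Real.log_div (ne_of_gt hS0) (ne_of_gt hB0)]
  -- bound first piece
  have bound1 : |∫ t in B..S, (K t - C₁ * t⁻¹) * Real.cos (ω * t)| ≤ c * B ^ (-β₁) / β₁ := by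
    have hptw : ∀ t ∈ Icc B S, |(K t - C₁ * t⁻¹) * Real.cos (ω * t)| ≤ c * t ^ (-β₁ - 1) := by
      intro t ht
      have ht0 : (0:ℝ) < t := lt_of_lt_of_le hB0 ht.1
      have h1 : K t - C₁ * t⁻¹ = (t * K t - C₁) * t⁻¹ := by
        field_simp
      have h2 : |K t - C₁ * t⁻¹| ≤ c * t ^ (-β₁) * t⁻¹ := by
        rw [h1, abs_mul, abs_of_pos (inv_pos.mpr ht0)]
        exact mul_le_mul_of_nonneg_right (hrate' t ht.1) (inv_pos.mpr ht0).le
      have h3 : c * t ^ (-β₁) * t⁻¹ = c * t ^ (-β₁ - 1) := by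
        rw [mul_assoc, ← Real.rpow_neg_one t, ← Real.rpow_add ht0]
        ring_nf
      calc |(K t - C₁ * t⁻¹) * Real.cos (ω * t)|
          ≤ |K t - C₁ * t⁻¹| * 1 := by
            rw [abs_mul]
            exact mul_le_mul_of_nonneg_left (abs_cos_le_one _) (abs_nonneg _)
        _ = |K t - C₁ * t⁻¹| := mul_one _
        _ ≤ c * t ^ (-β₁ - 1) := by rw [← h3]; exact h2
    have hrint : IntervalIntegrable (fun t : ℝ => c * t ^ (-β₁ - 1)) volume B S := by
      apply ContinuousOn.intervalIntegrable
      apply ContinuousOn.const_smul _ c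
      exact fun t ht => (Real.continuousAt_rpow_const t _ (Or.inl (hne t ht))).continuousWithinAt
    have step : |∫ t in B..S, (K t - C₁ * t⁻¹) * Real.cos (ω * t)|
        ≤ ∫ t in B..S, c * t ^ (-β₁ - 1) := by
      calc |∫ t in B..S, (K t - C₁ * t⁻¹) * Real.cos (ω * t)|
          ≤ ∫ t in B..S, |(K t - C₁ * t⁻¹) * Real.cos (ω * t)| := by
            have h0 := intervalIntegral.norm_integral_le_integral_norm
                (f := fun t => (K t - C₁ * t⁻¹) * Real.cos (ω * t)) (a := B) (b := S)
                (μ := volume) hBS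
            simpa only [Real.norm_eq_abs] using h0
        _ ≤ ∫ t in B..S, c * t ^ (-β₁ - 1) :=
            intervalIntegral.integral_mono_on hBS J1.abs hrint hptw
    have hval : (∫ t in B..S, c * t ^ (-β₁ - 1))
        = c * ((S ^ (-β₁) - B ^ (-β₁)) / (-β₁)) := by
      rw [intervalIntegral.integral_const_mul, integral_rpow]
      · norm_num
      · right
        refine ⟨by intro hcontra; linarith, ?_⟩
        rw [uIcc_of_le hBS]
        intro hmem
        exact absurd hmem.1 (not_le.mpr hB0)
    have hfin : c * ((S ^ (-β₁) - B ^ (-β₁)) / (-β₁)) ≤ c * B ^ (-β₁) / β₁ := by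
      have h2 : (0:ℝ) ≤ S ^ (-β₁) := Real.rpow_nonneg hS0.le _
      have hβne : β₁ ≠ 0 := ne_of_gt hβ₁
      have heq : c * ((S ^ (-β₁) - B ^ (-β₁)) / (-β₁)) = c * (B ^ (-β₁) - S ^ (-β₁)) / β₁ := by
        rw [div_neg, ← neg_div, neg_sub, mul_div_assoc]
      rw [heq]
      gcongr
      linarith
    linarith [step, hval ▸ step]
  -- bound second piece
  have bound2 : |∫ t in B..S, C₁ * (t⁻¹ * (Real.cos (ω * t) - 1))| ≤ C₁ / 4 := by
    have hptw : ∀ t ∈ Icc B S,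
        |C₁ * (t⁻¹ * (Real.cos (ω * t) - 1))| ≤ C₁ * ω^2 / 2 * t := by
      intro t ht
      have ht0 : (0:ℝ) < t := lt_of_lt_of_le hB0 ht.1
      have h1 : |Real.cos (ω * t) - 1| ≤ (ω * t)^2 / 2 := by
        rw [abs_of_nonpos (by linarith [Real.cos_le_one (ω * t)])]
        have := Real.one_sub_sq_div_two_le_cos (x := ω * t)
        linarith
      rw [abs_mul, abs_of_pos hC₁, abs_mul, abs_of_pos (inv_pos.mpr ht0)]
      calc C₁ * (t⁻¹ * |Real.cos (ω * t) - 1|) ≤ C₁ * (t⁻¹ * ((ω * t)^2 / 2)) := by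
            apply mul_le_mul_of_nonneg_left _ hC₁.le
            exact mul_le_mul_of_nonneg_left h1 (inv_pos.mpr ht0).le
        _ = C₁ * ω^2 / 2 * t := by field_simp
    have hbint : IntervalIntegrable (fun t : ℝ => C₁ * ω^2 / 2 * t) volume B S :=
      (continuous_const.mul continuous_id).intervalIntegrable _ _
    have step : |∫ t in B..S, C₁ * (t⁻¹ * (Real.cos (ω * t) - 1))|
        ≤ ∫ t in B..S, C₁ * ω^2 / 2 * t := by
      calc |∫ t in B..S, C₁ * (t⁻¹ * (Real.cos (ω * t) - 1))|
          ≤ ∫ t in B..S, |C₁ * (t⁻¹ * (Real.cos (ω * t) - 1))| := by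
            have h0 := intervalIntegral.norm_integral_le_integral_norm
                (f := fun t => C₁ * (t⁻¹ * (Real.cos (ω * t) - 1))) (a := B) (b := S)
                (μ := volume) hBS
            simpa only [Real.norm_eq_abs] using h0
        _ ≤ ∫ t in B..S, C₁ * ω^2 / 2 * t :=
            intervalIntegral.integral_mono_on hBS J2.abs hbint hptw
    have hval : (∫ t in B..S, C₁ * ω^2 / 2 * t) = C₁ * ω^2 / 2 * ((S^2 - B^2)/2) := by
      rw [intervalIntegral.integral_const_mul, integral_id]
    have hfin : C₁ * ω^2 / 2 * ((S^2 - B^2)/2) ≤ C₁ / 4 := by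
      have h1 : ω^2 * S^2 = 1 := by rw [← mul_pow, hωS]; norm_num
      nlinarith [h1, sq_nonneg (ω * B), hC₁.le]
    linarith [step, hval ▸ step]
  calc |(∫ t in B..S, K t * Real.cos (ω * t)) - C₁ * (Real.log S - Real.log B)|
      = |(∫ t in B..S, (K t - C₁ * t⁻¹) * Real.cos (ω * t))
          + (∫ t in B..S, C₁ * (t⁻¹ * (Real.cos (ω * t) - 1)))| := by
        rw [hsplit, hlog]
        congr 1
        ring
    _ ≤ |∫ t in B..S, (K t - C₁ * t⁻¹) * Real.cos (ω * t)|
        + |∫ t in B..S, C₁ * (t⁻¹ * (Real.cos (ω * t) - 1))| := abs_add_le _ _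
    _ ≤ c * B ^ (-β₁) / β₁ + C₁ / 4 := add_le_add bound1 bound2

lemma tri4 (a b c d : ℝ) : |a + b + c + d| ≤ |a| + |b| + |c| + |d| := by
  calc |a + b + c + d| ≤ |a + b + c| + |d| := abs_add_le _ _
    _ ≤ (|a + b| + |c|) + |d| := by linarith [abs_add_le (a + b) c]
    _ ≤ |a| + |b| + |c| + |d| := by linarith [abs_add_le a b]

theorem stmt_4 (K : ℝ → ℝ) (C₁ β₁ : ℝ) (hC₁ : 0 < C₁) (hβ₁ : 0 < β₁)
    (hKnonneg : ∀ t ∈ Ioi (0:ℝ), 0 ≤ K t)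
    (hloc : LocallyIntegrableOn K (Ioi 0))
    (hint0 : IntegrableOn K (Ioc 0 1))
    (hdec : ∃ A > (0:ℝ), AntitoneOn K (Ici A))
    (hK0 : Tendsto K atTop (nhds 0))
    (hrate : (fun t => t * K t - C₁) =O[atTop] fun t => t ^ (-β₁))
    (Kcos : ℝ → ℝ)
    (hKcos : ∀ ω > (0:ℝ),
      Tendsto (fun T => ∫ t in (0:ℝ)..T, K t * Real.cos (ω * t)) atTop (nhds (Kcos ω))) :
    (fun ω => Kcos ω / |Real.log ω| - C₁) =O[nhdsWithin 0 (Ioi 0)]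
      fun ω => |Real.log ω|⁻¹ := by
  obtain ⟨A, hA, hanti⟩ := hdec
  obtain ⟨c, hc, hcw⟩ := hrate.exists_pos
  obtain ⟨t₀, ht₀⟩ := eventually_atTop.mp hcw.bound
  set B : ℝ := max A (max t₀ 1) with hBdef
  have hB1 : (1:ℝ) ≤ B := le_max_of_le_right (le_max_right _ _)
  have hB0 : (0:ℝ) < B := lt_of_lt_of_le one_pos hB1
  have hAB : A ≤ B := le_max_left _ _
  have ht₀B : t₀ ≤ B := le_max_of_le_right (le_max_left _ _)
  have hrate' : ∀ t, B ≤ t → |t * K t - C₁| ≤ c * t ^ (-β₁) := by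
    intro t ht
    have h1 := ht₀ t (le_trans ht₀B ht)
    rw [Real.norm_eq_abs, Real.norm_eq_abs] at h1
    have ht0 : (0:ℝ) < t := lt_of_lt_of_le hB0 ht
    rwa [abs_of_nonneg (Real.rpow_nonneg ht0.le _)] at h1
  have hnnA : ∀ t ∈ Ici A, 0 ≤ K t := fun t ht => hKnonneg t (lt_of_lt_of_le hA ht)
  -- integrability on (0, B]
  have hIK0B : IntegrableOn K (Ioc 0 B) := by
    have h1 : IntegrableOn K (Ioc 1 B) := by
      have h2 : IntegrableOn K (Icc 1 B) :=
        hloc.integrableOn_compact_subset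
          (fun x hx => lt_of_lt_of_le one_pos hx.1) isCompact_Icc
      exact h2.mono_set Ioc_subset_Icc_self
    have := hint0.union h1
    rwa [Ioc_union_Ioc_eq_Ioc zero_le_one hB1] at this
  have hII0B : IntervalIntegrable K volume 0 B := by
    rw [intervalIntegrable_iff, uIoc_of_le hB0.le]
    exact hIK0B
  set M₀ : ℝ := ∫ t in (0:ℝ)..B, |K t| with hM₀
  set D : ℝ := M₀ + (c * B ^ (-β₁) / β₁ + C₁ / 4) + 3/2 * ((C₁ + c) * π) + C₁ * Real.log B
    with hD
  rw [isBigO_iff]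
  refine ⟨D, ?_⟩
  have hmem : Ioo (0:ℝ) (B+1)⁻¹ ∈ nhdsWithin 0 (Ioi 0) :=
    Ioo_mem_nhdsGT_of_mem ⟨le_refl _, by positivity⟩
  filter_upwards [hmem] with ω hωmem
  obtain ⟨hω0, hω1⟩ := hωmem
  set S : ℝ := ω⁻¹ with hSdef
  have hS0 : 0 < S := inv_pos.mpr hω0
  have hωS : ω * S = 1 := mul_inv_cancel₀ (ne_of_gt hω0)
  have hSB : B + 1 < S := by
    have h1 : ω * (B + 1) < (B+1)⁻¹ * (B+1) := mul_lt_mul_of_pos_right hω1 (by positivity)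
    rw [inv_mul_cancel₀ (by positivity : (B:ℝ) + 1 ≠ 0)] at h1
    nlinarith [hωS, hω0]
  have hBS : B ≤ S := by linarith
  have hω_lt_1 : ω < 1 := lt_of_lt_of_le hω1 (by
    rw [inv_le_one_iff₀]
    right; linarith)
  have hlogneg : Real.log ω < 0 := Real.log_neg hω0 hω_lt_1
  have hL : |Real.log ω| = Real.log S := by
    rw [abs_of_neg hlogneg, hSdef, Real.log_inv]
  have hLpos : 0 < Real.log S := by rw [← hL]; exact abs_pos.mpr (ne_of_lt hlogneg)
  -- the key bound
  have key : |Kcos ω - C₁ * Real.log S| ≤ D := by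
    have htend : Tendsto (fun T => |(∫ t in (0:ℝ)..T, K t * Real.cos (ω * t))
        - C₁ * Real.log S|) atTop (nhds (|Kcos ω - C₁ * Real.log S|)) :=
      ((hKcos ω hω0).sub_const _).abs
    refine le_of_tendsto htend ?_
    filter_upwards [eventually_ge_atTop S] with T hTS
    have hAS : A ≤ S := le_trans hAB hBS
    have hAT : A ≤ T := le_trans hAS hTS
    have hcosc : Continuous fun t : ℝ => Real.cos (ω * t) :=
      Real.continuous_cos.comp (continuous_const.mul continuous_id)
    have hI0B : IntervalIntegrable (fun t => K t * Real.cos (ω * t)) volume 0 B :=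
      hII0B.mul_continuousOn hcosc.continuousOn
    have hIBS : IntervalIntegrable (fun t => K t * Real.cos (ω * t)) volume B S :=
      (aux_II K A hA hloc hAB hAS).mul_continuousOn hcosc.continuousOn
    have hIST : IntervalIntegrable (fun t => K t * Real.cos (ω * t)) volume S T :=
      (aux_II K A hA hloc hAS hAT).mul_continuousOn hcosc.continuousOn
    have hsplit : (∫ t in (0:ℝ)..T, K t * Real.cos (ω * t))
        = (∫ t in (0:ℝ)..B, K t * Real.cos (ω * t))
          + (∫ t in B..S, K t * Real.cos (ω * t))
          + ∫ t in S..T, K t * Real.cos (ω * t) := by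
      rw [intervalIntegral.integral_add_adjacent_intervals hI0B hIBS,
        intervalIntegral.integral_add_adjacent_intervals (hI0B.trans hIBS) hIST]
    -- bound piece 0
    have b0 : |∫ t in (0:ℝ)..B, K t * Real.cos (ω * t)| ≤ M₀ := by
      calc |∫ t in (0:ℝ)..B, K t * Real.cos (ω * t)|
          ≤ ∫ t in (0:ℝ)..B, |K t * Real.cos (ω * t)| := by
            have h0 := intervalIntegral.norm_integral_le_integral_norm
              (f := fun t => K t * Real.cos (ω * t)) (a := 0) (b := B) (μ := volume) hB0.le
            simpa only [Real.norm_eq_abs] using h0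
        _ ≤ ∫ t in (0:ℝ)..B, |K t| := by
            apply intervalIntegral.integral_mono_on hB0.le hI0B.abs hII0B.abs
            intro x _
            rw [abs_mul]
            calc |K x| * |Real.cos (ω * x)| ≤ |K x| * 1 :=
                  mul_le_mul_of_nonneg_left (abs_cos_le_one _) (abs_nonneg _)
              _ = |K x| := mul_one _
        _ = M₀ := rfl
    -- middle piece
    have bmid := middle_bound K C₁ β₁ c B hC₁ hβ₁ hc.le hB1 hrate' ω hω0 hBS
      (aux_II K A hA hloc hAB hAS)
    -- tail piece
    have btail : |∫ t in S..T, K t * Real.cos (ω * t)| ≤ 3/2 * ((C₁ + c) * π) := by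
      have h1 := dirichlet_bound K A hA hanti hnnA hloc ω S T hω0 hAS hTS
      have hKS1 : S * K S ≤ C₁ + c := by
        have h2 := hrate' S hBS
        have h3 : S ^ (-β₁) ≤ 1 := by
          apply Real.rpow_le_one_of_one_le_of_nonpos (by linarith) (by linarith)
        have h4 : |S * K S - C₁| ≤ c := le_trans h2 (by nlinarith)
        have := abs_le.mp h4
        linarith [this.2]
      have hKSnn : 0 ≤ K S := hnnA S (le_trans hAB hBS)
      have h5 : K S * (π / ω) = (S * K S) * π := by
        rw [hSdef]
        field_simp
      calc |∫ t in S..T, K t * Real.cos (ω * t)| ≤ 3/2 * (K S * (π / ω)) := h1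
        _ = 3/2 * ((S * K S) * π) := by rw [h5]
        _ ≤ 3/2 * ((C₁ + c) * π) := by
            have : (S * K S) * π ≤ (C₁ + c) * π :=
              mul_le_mul_of_nonneg_right hKS1 Real.pi_pos.le
            linarith
    -- combine
    have expand : (∫ t in (0:ℝ)..T, K t * Real.cos (ω * t)) - C₁ * Real.log S
        = (∫ t in (0:ℝ)..B, K t * Real.cos (ω * t))
          + ((∫ t in B..S, K t * Real.cos (ω * t)) - C₁ * (Real.log S - Real.log B))
          + (∫ t in S..T, K t * Real.cos (ω * t))
          + (-(C₁ * Real.log B)) := by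
      rw [hsplit]; ring
    have hlogB : 0 ≤ Real.log B := Real.log_nonneg hB1
    calc |(∫ t in (0:ℝ)..T, K t * Real.cos (ω * t)) - C₁ * Real.log S|
        ≤ |∫ t in (0:ℝ)..B, K t * Real.cos (ω * t)|
          + |(∫ t in B..S, K t * Real.cos (ω * t)) - C₁ * (Real.log S - Real.log B)|
          + |∫ t in S..T, K t * Real.cos (ω * t)|
          + |-(C₁ * Real.log B)| := by
            rw [expand]; exact tri4 _ _ _ _
      _ ≤ D := by
          rw [abs_neg, abs_of_nonneg (by positivity : 0 ≤ C₁ * Real.log B)]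
          rw [hD]
          linarith [b0, bmid, btail]
  -- conclude
  rw [Real.norm_eq_abs, Real.norm_eq_abs, hL]
  have hrw : Kcos ω / Real.log S - C₁ = (Kcos ω - C₁ * Real.log S) / Real.log S := by
    field_simp
  rw [hrw, abs_div, abs_of_pos hLpos, abs_inv, abs_of_pos hLpos, ← div_eq_mul_inv]
  exact (div_le_div_iff_of_pos_right hLpos).mpr key
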